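/- With E(X,D) as above, the quotient map σ : E(X,D) → H obtained by collapsing X × {o} to a single point (with the induced metric-quotient distance: the distance between the collapsed point * and (d_n,u) is ρ_C(u,o)/n, and the distance between (d_m,u) and (d_n,v) for m ≠ n is ρ_C(u,o)/m + ρ_C(v,o)/n) yields a space homeomorphic to the Hawaiian earring, and σ is continuous. -/

import Mathlib

/-! Collapsing the base copy `X × {o}` of the earring space `E(X,D)` to a point yields,
with the metric-quotient distance, a space homeomorphic to the Hawaiian earring, and the
quotient map `σ` is continuous. -/

open Classical

noncomputable section

namespace EarringPaper

variable {X : Type*} [MetricSpace X]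

def wt (d : ℕ+ → X) (x : X) : ℝ :=
  if h : ∃ n : ℕ+, x = d n then 1 / (h.choose : ℝ) else 0

def rho (d : ℕ+ → X) (p q : X × Circle) : ℝ :=
  if p.1 = q.1 ∧ ∃ n : ℕ+, p.1 = d n then wt d p.1 * dist p.2 q.2
  else dist p.1 q.1 + wt d p.1 * dist p.2 1 + wt d q.1 * dist q.2 1

def ECar (d : ℕ+ → X) : Set (X × Circle) := {p | p.2 = 1 ∨ ∃ n : ℕ+, p.1 = d n}

/-- The Hawaiian earring `H = ⋃_{n ≥ 1} C_n ⊆ ℝ²`, `C_n` the circle of radius `1/n`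
centered at `(-1/n, 0)`. -/
def HEset : Set (ℝ × ℝ) :=
  {p | ∃ n : ℕ+, (p.1 + 1 / (n : ℝ)) ^ 2 + p.2 ^ 2 = (1 / (n : ℝ)) ^ 2}

/-- The model of the metric quotient: the disjoint circles `{n} × S¹` with all the
basepoints `(n, o)` identified to a single point `*`. -/
def wedgeSetoid : Setoid (ℕ+ × Circle) where
  r p q := p = q ∨ (p.2 = 1 ∧ q.2 = 1)
  iseqv := by
    constructor
    · intro x; exact Or.inl rfl
    · rintro x y (rfl | ⟨h1, h2⟩)
      · exact Or.inl rfl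
      · exact Or.inr ⟨h2, h1⟩
    · rintro x y z (rfl | ⟨h1, h2⟩) (rfl | ⟨h3, h4⟩)
      · exact Or.inl rfl
      · exact Or.inr ⟨h3, h4⟩
      · exact Or.inr ⟨h1, h2⟩
      · exact Or.inr ⟨h1, h4⟩

/-- The metric quotient map `σ` collapsing `X × {o}` to the point `*`. -/
def sigmaQ (d : ℕ+ → X) (p : X × Circle) : Quotient wedgeSetoid :=
  if h : ∃ n : ℕ+, p.1 = d n then ⟦(h.choose, p.2)⟧ else ⟦(1, 1)⟧

/-! ### Auxiliary material -/

noncomputable def circPt (a b : ℝ) (h : a ^ 2 + b ^ 2 = 1) : Circle :=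
  ⟨⟨a, b⟩, mem_sphere_zero_iff_norm.mpr (by
    rw [Complex.norm_def, Complex.normSq_mk, ← pow_two, ← pow_two, h,
      Real.sqrt_one])⟩

@[simp] lemma circPt_re (a b : ℝ) (h : a ^ 2 + b ^ 2 = 1) : ((circPt a b h : ℂ)).re = a := rfl
@[simp] lemma circPt_im (a b : ℝ) (h : a ^ 2 + b ^ 2 = 1) : ((circPt a b h : ℂ)).im = b := rfl

lemma circle_sq (u : Circle) : ((u:ℂ)).re ^ 2 + ((u:ℂ)).im ^ 2 = 1 := by
  have h := Circle.normSq_coe u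
  rwa [Complex.normSq_apply, ← pow_two, ← pow_two] at h

lemma circle_dist (u v : Circle) : dist u v = ‖(u:ℂ) - (v:ℂ)‖ := by
  rw [show dist u v = dist (u:ℂ) (v:ℂ) from rfl, Complex.dist_eq]

lemma circle_dist_le (u v : Circle) :
    dist u v ≤ |((u:ℂ)).re - ((v:ℂ)).re| + |((u:ℂ)).im - ((v:ℂ)).im| := by
  rw [circle_dist]
  simpa [Complex.sub_re, Complex.sub_im] using Complex.norm_le_abs_re_add_abs_im ((u:ℂ) - (v:ℂ))

lemma re_dist_le (u v : Circle) : |((u:ℂ)).re - ((v:ℂ)).re| ≤ dist u v := by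
  rw [circle_dist]
  simpa [Complex.sub_re] using Complex.abs_re_le_norm ((u:ℂ) - (v:ℂ))

lemma im_dist_le (u v : Circle) : |((u:ℂ)).im - ((v:ℂ)).im| ≤ dist u v := by
  rw [circle_dist]
  simpa [Complex.sub_im] using Complex.abs_im_le_norm ((u:ℂ) - (v:ℂ))

lemma pnat_pos (n : ℕ+) : (0:ℝ) < (n:ℝ) := by exact_mod_cast n.pos
lemma pnat_ne (n : ℕ+) : (n:ℝ) ≠ 0 := ne_of_gt (pnat_pos n)

lemma pnat_eq_of_abs_lt {m k : ℕ+} (h : |(m:ℝ) - (k:ℝ)| < 1) : m = k := by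
  by_contra hne
  have hne' : (m:ℕ) ≠ (k:ℕ) := fun hc => hne (PNat.coe_injective hc)
  rw [abs_sub_lt_iff] at h
  rcases hne'.lt_or_gt with hl | hl
  · have : (m:ℝ) + 1 ≤ (k:ℝ) := by exact_mod_cast Nat.succ_le_of_lt hl
    linarith [h.2]
  · have : (k:ℝ) + 1 ≤ (m:ℝ) := by exact_mod_cast Nat.succ_le_of_lt hl
    linarith [h.1]

noncomputable def toPlane (p : ℕ+ × Circle) : ℝ × ℝ :=
  ((((p.2 : ℂ)).re - 1) / (p.1:ℝ), ((p.2:ℂ)).im / (p.1:ℝ))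

lemma circle_eqn {n : ℕ+} {a b : ℝ} :
    (a + 1 / (n:ℝ)) ^ 2 + b ^ 2 = (1 / (n:ℝ)) ^ 2 ↔ (n:ℝ) * (a ^ 2 + b ^ 2) = -(2 * a) := by
  have hn := pnat_ne n
  constructor
  · intro h
    field_simp at h
    nlinarith [h, pnat_pos n]
  · intro h
    field_simp
    nlinarith [h, pnat_pos n]

lemma toPlane_heq (p : ℕ+ × Circle) :
    ((toPlane p).1 + 1 / (p.1:ℝ)) ^ 2 + (toPlane p).2 ^ 2 = (1 / (p.1:ℝ)) ^ 2 := by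
  rw [circle_eqn]
  have h := circle_sq p.2
  have hn := pnat_ne p.1
  simp only [toPlane]
  field_simp
  ring_nf
  nlinarith [h]

lemma toPlane_mem (p : ℕ+ × Circle) : toPlane p ∈ HEset := ⟨p.1, toPlane_heq p⟩

lemma mem_def {p : ℝ × ℝ} : p ∈ HEset ↔
    ∃ n : ℕ+, (p.1 + 1/(n:ℝ))^2 + p.2^2 = (1/(n:ℝ))^2 := Iff.rfl

noncomputable def idx (h : HEset) : ℕ+ := (mem_def.mp h.2).choose

lemma idx_spec (h : HEset) : (idx h : ℝ) * (h.1.1^2 + h.1.2^2) = -(2 * h.1.1) :=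
  circle_eqn.mp (mem_def.mp h.2).choose_spec

lemma upt_sq (h : HEset) :
    ((idx h : ℝ) * h.1.1 + 1)^2 + ((idx h : ℝ) * h.1.2)^2 = 1 := by
  nlinarith [idx_spec h]

noncomputable def upt (h : HEset) : Circle :=
  circPt ((idx h : ℝ) * h.1.1 + 1) ((idx h : ℝ) * h.1.2) (upt_sq h)

@[simp] lemma upt_re (h : HEset) : ((upt h : ℂ)).re = (idx h : ℝ) * h.1.1 + 1 := rfl
@[simp] lemma upt_im (h : HEset) : ((upt h : ℂ)).im = (idx h : ℝ) * h.1.2 := rfl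

noncomputable def invMap (h : HEset) : Quotient wedgeSetoid := ⟦(idx h, upt h)⟧

noncomputable def fwd : Quotient wedgeSetoid → HEset :=
  Quotient.lift (fun p => (⟨toPlane p, toPlane_mem p⟩ : HEset)) (by
    rintro ⟨m, u⟩ ⟨n, v⟩ (h | ⟨h1, h2⟩)
    · rw [h]
    · simp only at h1 h2
      subst h1; subst h2
      apply Subtype.ext
      simp [toPlane, Circle.coe_one])

lemma sq_pos_of_ne {a b : ℝ} (hab : ¬(a = 0 ∧ b = 0)) : 0 < a ^ 2 + b ^ 2 := by
  rcases not_and_or.mp hab with h | h <;> positivity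

lemma idx_unique {a b : ℝ} (hab : ¬(a = 0 ∧ b = 0)) {m n : ℕ+}
    (hm : (m:ℝ) * (a ^ 2 + b ^ 2) = -(2 * a)) (hn : (n:ℝ) * (a ^ 2 + b ^ 2) = -(2 * a)) :
    m = n := by
  have hs := sq_pos_of_ne hab
  have : (m:ℝ) = (n:ℝ) := mul_right_cancel₀ (ne_of_gt hs) (hm.trans hn.symm)
  exact_mod_cast this

lemma fwd_left_inv : Function.LeftInverse invMap fwd := by
  intro q
  obtain ⟨⟨m, u⟩, rfl⟩ := Quotient.exists_rep q
  set h : HEset := fwd ⟦(m, u)⟧ with hh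
  have hval : h.1 = toPlane (m, u) := rfl
  by_cases hu : u = 1
  · subst hu
    have hupt : upt h = 1 := by
      apply Circle.coe_injective
      apply Complex.ext
      · simp [hval, toPlane, Circle.coe_one]
      · simp [hval, toPlane, Circle.coe_one]
    exact Quotient.sound (Or.inr ⟨hupt, rfl⟩)
  · have hab : ¬(h.1.1 = 0 ∧ h.1.2 = 0) := by
      rintro ⟨h1, h2⟩
      apply hu
      apply Circle.coe_injective
      apply Complex.ext
      · have h1' : (((u:ℂ)).re - 1) / (m:ℝ) = 0 := h1
        have := (div_eq_zero_iff.mp h1').resolve_right (pnat_ne m)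
        simp [Circle.coe_one]; linarith
      · have h2' : ((u:ℂ)).im / (m:ℝ) = 0 := h2
        have := (div_eq_zero_iff.mp h2').resolve_right (pnat_ne m)
        simp [Circle.coe_one, this]
    have hm : (m:ℝ) * (h.1.1 ^ 2 + h.1.2 ^ 2) = -(2 * h.1.1) := by
      have := toPlane_heq (m, u)
      rw [hval]
      exact circle_eqn.mp this
    have hidx : idx h = m := idx_unique hab (idx_spec h) hm
    have hupt : upt h = u := by
      apply Circle.coe_injective
      apply Complex.ext
      · rw [upt_re, hidx, hval]
        show (m:ℝ) * ((((u:ℂ)).re - 1) / (m:ℝ)) + 1 = ((u:ℂ)).re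
        field_simp
        ring
      · rw [upt_im, hidx, hval]
        show (m:ℝ) * (((u:ℂ)).im / (m:ℝ)) = ((u:ℂ)).im
        field_simp
    rw [invMap, hidx, hupt]

lemma fwd_right_inv : Function.RightInverse invMap fwd := by
  intro h
  apply Subtype.ext
  show toPlane (idx h, upt h) = h.1
  have hn := pnat_ne (idx h)
  apply Prod.ext
  · show (((upt h : ℂ)).re - 1) / ((idx h : ℝ)) = h.1.1
    rw [upt_re]
    field_simp
    ring
  · show ((upt h : ℂ)).im / ((idx h : ℝ)) = h.1.2
    rw [upt_im]
    field_simp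

noncomputable def theEquiv : Quotient wedgeSetoid ≃ HEset :=
  ⟨fwd, invMap, fwd_left_inv, fwd_right_inv⟩

set_option maxHeartbeats 1000000 in
lemma idx_close {a b a' b' δ M : ℝ} {n n' : ℕ+}
    (hn : (n:ℝ) * (a ^ 2 + b ^ 2) = -(2 * a))
    (hn' : (n':ℝ) * (a' ^ 2 + b' ^ 2) = -(2 * a'))
    (hspos : 0 < a ^ 2 + b ^ 2)
    (hMa : |a| ≤ M) (hMb : |b| ≤ M)
    (hδ : δ * (60 * (M + 1) ^ 3) = (a ^ 2 + b ^ 2) ^ 2)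
    (ha : |a - a'| < δ) (hb : |b - b'| < δ) : n = n' := by
  set s := a ^ 2 + b ^ 2 with hs
  set s' := a' ^ 2 + b' ^ 2 with hs'
  have hM0 : 0 ≤ M := le_trans (abs_nonneg a) hMa
  have ha2 : a ^ 2 ≤ M ^ 2 := by nlinarith [sq_abs a, abs_nonneg a]
  have hb2 : b ^ 2 ≤ M ^ 2 := by nlinarith [sq_abs b, abs_nonneg b]
  have hsM : s ≤ 2 * M ^ 2 := by rw [hs]; linarith
  have hM : 0 < M := by nlinarith
  have hpow : (0:ℝ) < 60 * (M + 1) ^ 3 := by positivity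
  have hs2pos : (0:ℝ) < s ^ 2 := by positivity
  have hδpos : 0 < δ := by
    by_contra hcon
    push_neg at hcon
    nlinarith
  have hs4 : s ^ 2 ≤ 4 * M ^ 4 := by nlinarith [hsM, hspos]
  have hMP : 4 * M ^ 4 ≤ M * (60 * (M + 1) ^ 3) := by
    nlinarith [pow_nonneg hM0 4, pow_nonneg hM0 3, pow_nonneg hM0 2, hM0]
  have hδM : δ ≤ M := le_of_mul_le_mul_right (by linarith [hδ]) hpow
  have ha' : |a'| ≤ 2 * M := by
    have h1 := abs_sub_abs_le_abs_sub a' a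
    rw [abs_sub_comm a' a] at h1; linarith
  have hb' : |b'| ≤ 2 * M := by
    have h1 := abs_sub_abs_le_abs_sub b' b
    rw [abs_sub_comm b' b] at h1; linarith
  have hss' : |s - s'| ≤ 6 * M * δ := by
    have e : s - s' = (a - a') * (a + a') + (b - b') * (b + b') := by rw [hs, hs']; ring
    rw [e]
    have h1 : |(a - a') * (a + a')| ≤ δ * (3 * M) := by
      rw [abs_mul]
      have h3 : |a + a'| ≤ 3 * M := (abs_add_le a a').trans (by linarith)
      exact mul_le_mul ha.le h3 (abs_nonneg _) hδpos.le
    have h2 : |(b - b') * (b + b')| ≤ δ * (3 * M) := by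
      rw [abs_mul]
      have h3 : |b + b'| ≤ 3 * M := (abs_add_le b b').trans (by linarith)
      exact mul_le_mul hb.le h3 (abs_nonneg _) hδpos.le
    calc |(a - a') * (a + a') + (b - b') * (b + b')|
        ≤ |(a - a') * (a + a')| + |(b - b') * (b + b')| := abs_add_le _ _
      _ ≤ 6 * M * δ := by linarith
  have hs'low : s / 2 ≤ s' := by
    have hMs : M * s ≤ M * (2 * M ^ 2) := mul_le_mul_of_nonneg_left hsM hM.le
    have eMs : M * (2 * M ^ 2) = 2 * M ^ 3 := by ring
    have hcube : 24 * M ^ 3 ≤ 60 * (M + 1) ^ 3 := by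
      nlinarith [pow_nonneg hM0 3, sq_nonneg M, hM0]
    have hA : 12 * M * s ≤ 60 * (M + 1) ^ 3 := by
      have : 12 * M * s = 12 * (M * s) := by ring
      rw [this]
      linarith
    have hB : (12 * M * δ) * (60 * (M + 1) ^ 3) ≤ s * (60 * (M + 1) ^ 3) := by
      calc (12 * M * δ) * (60 * (M + 1) ^ 3) = 12 * M * (δ * (60 * (M + 1) ^ 3)) := by ring
        _ = 12 * M * s ^ 2 := by rw [hδ]
        _ = (12 * M * s) * s := by ring
        _ ≤ (60 * (M + 1) ^ 3) * s := mul_le_mul_of_nonneg_right hA hspos.le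
        _ = s * (60 * (M + 1) ^ 3) := by ring
    have h12 : 12 * M * δ ≤ s := le_of_mul_le_mul_right hB hpow
    have h6 : s - s' ≤ 6 * M * δ := (le_abs_self _).trans hss'
    linarith
  have hNs : (n':ℝ) * s ≤ 8 * M := by
    have h1 : (n':ℝ) * s' ≤ 4 * M := by
      rw [hn']
      have := neg_le_abs a'
      linarith
    have hn'pos : (0:ℝ) < (n':ℝ) := pnat_pos n'
    nlinarith [h1, hs'low, hn'pos]
  have e2 : ((n:ℝ) - (n':ℝ)) * s = (-(2 * a) + 2 * a') + (n':ℝ) * (s' - s) := by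
    linear_combination hn - hn'
  have key : |(n:ℝ) - (n':ℝ)| * s ≤ 2 * δ + (n':ℝ) * (6 * M * δ) := by
    have h0 : |((n:ℝ) - (n':ℝ)) * s| ≤ |(-(2 * a) + 2 * a')| + |(n':ℝ) * (s' - s)| := by
      rw [e2]; exact abs_add_le _ _
    rw [abs_mul, abs_of_pos hspos] at h0
    have h1 : |(-(2 * a) + 2 * a')| ≤ 2 * δ := by
      have e3 : -(2 * a) + 2 * a' = -(2 * (a - a')) := by ring
      rw [e3, abs_neg, abs_mul, abs_two]
      linarith
    have h2 : |(n':ℝ) * (s' - s)| ≤ (n':ℝ) * (6 * M * δ) := by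
      rw [abs_mul, abs_of_pos (pnat_pos n')]
      have : |s' - s| ≤ 6 * M * δ := by rw [abs_sub_comm]; exact hss'
      exact mul_le_mul_of_nonneg_left this (pnat_pos n').le
    linarith
  have h3 : 6 * M * δ * ((n':ℝ) * s) ≤ 6 * M * δ * (8 * M) :=
    mul_le_mul_of_nonneg_left hNs (by positivity)
  have key2 : |(n:ℝ) - (n':ℝ)| * s ^ 2 ≤ 2 * δ * s + 48 * M ^ 2 * δ := by
    calc |(n:ℝ) - (n':ℝ)| * s ^ 2 = (|(n:ℝ) - (n':ℝ)| * s) * s := by ring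
      _ ≤ (2 * δ + (n':ℝ) * (6 * M * δ)) * s := mul_le_mul_of_nonneg_right key hspos.le
      _ = 2 * δ * s + 6 * M * δ * ((n':ℝ) * s) := by ring
      _ ≤ 2 * δ * s + 6 * M * δ * (8 * M) := by linarith
      _ = 2 * δ * s + 48 * M ^ 2 * δ := by ring
  have hfin : 2 * δ * s + 48 * M ^ 2 * δ < s ^ 2 := by
    have hlt : 2 * s + 48 * M ^ 2 < 60 * (M + 1) ^ 3 := by
      nlinarith [hsM, hM, pow_nonneg hM0 3, pow_nonneg hM0 2, hM0]
    have hmul := mul_lt_mul_of_pos_left hlt hδpos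
    rw [hδ] at hmul
    have e : δ * (2 * s + 48 * M ^ 2) = 2 * δ * s + 48 * M ^ 2 * δ := by ring
    linarith
  have hlast : |(n:ℝ) - (n':ℝ)| * s ^ 2 < 1 * s ^ 2 := by rw [one_mul]; linarith
  exact pnat_eq_of_abs_lt (lt_of_mul_lt_mul_right hlast (sq_nonneg s))

lemma dist_he (h h' : HEset) :
    dist h h' = max |h.1.1 - h'.1.1| |h.1.2 - h'.1.2| := by
  rw [Subtype.dist_eq, Prod.dist_eq, Real.dist_eq, Real.dist_eq]

lemma upt_dist_one (h : HEset) :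
    dist (upt h) 1 / ((idx h : ℕ+) : ℝ) ≤ |h.1.1| + |h.1.2| := by
  rw [div_le_iff₀ (pnat_pos _)]
  have h1 := circle_dist_le (upt h) 1
  rw [upt_re, upt_im, Circle.coe_one, Complex.one_re, Complex.one_im] at h1
  have e1 : (idx h : ℝ) * h.1.1 + 1 - 1 = (idx h : ℝ) * h.1.1 := by ring
  rw [e1, sub_zero, abs_mul, abs_mul, abs_of_pos (pnat_pos (idx h))] at h1
  calc dist (upt h) 1 ≤ (idx h : ℝ) * |h.1.1| + (idx h : ℝ) * |h.1.2| := h1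
    _ = (|h.1.1| + |h.1.2|) * (idx h : ℝ) := by ring


lemma invMap_def (h : HEset) : invMap h = ⟦(idx h, upt h)⟧ := rfl

lemma wt_pos_eq (d : ℕ+ → X) {x : X} (hx : ∃ n : ℕ+, x = d n) :
    wt d x = 1 / ((hx.choose : ℕ+) : ℝ) := dif_pos hx

lemma wt_neg_eq (d : ℕ+ → X) {x : X} (hx : ¬ ∃ n : ℕ+, x = d n) :
    wt d x = 0 := dif_neg hx

/-- The metric quotient of `E(X,D)` obtained by collapsing `X × {o}` to one point, with
the quotient distance (`ρ_C(u,o)/n` from `*` to a point of the `n`-th circle, and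
`ρ_C(u,o)/m + ρ_C(v,o)/n` between points of distinct circles), is homeomorphic to the
Hawaiian earring, and `σ` is continuous from `ρ` to this quotient distance. -/
theorem metric_quotient_homeo_hawaiian (d : ℕ+ → X)
    (hd : Function.Injective d) (hdense : DenseRange d)
    (dQ : Quotient wedgeSetoid → Quotient wedgeSetoid → ℝ)
    (hdQ₁ : ∀ (n : ℕ+) (u v : Circle), dQ ⟦(n, u)⟧ ⟦(n, v)⟧ = dist u v / (n : ℝ))
    (hdQ₂ : ∀ (m n : ℕ+) (u v : Circle), m ≠ n →
      dQ ⟦(m, u)⟧ ⟦(n, v)⟧ = dist u 1 / (m : ℝ) + dist v 1 / (n : ℝ)) :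
    ∃ φ : Quotient wedgeSetoid ≃ HEset,
      (∀ q : Quotient wedgeSetoid, ∀ ε > (0 : ℝ), ∃ δ > (0 : ℝ),
        ∀ q' : Quotient wedgeSetoid, dQ q q' < δ → dist (φ q) (φ q') < ε) ∧
      (∀ h : HEset, ∀ ε > (0 : ℝ), ∃ δ > (0 : ℝ),
        ∀ h' : HEset, dist h h' < δ → dQ (φ.symm h) (φ.symm h') < ε) ∧
      (∀ p : ECar d, ∀ ε > (0 : ℝ), ∃ δ > (0 : ℝ), ∀ q : ECar d,
        rho d p.val q.val < δ → dQ (sigmaQ d p.val) (sigmaQ d q.val) < ε) := by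
  refine ⟨theEquiv, ?_, ?_, ?_⟩
  · -- forward Lipschitz
    have key1 : ∀ (m n : ℕ+) (u v : Circle),
        dist (theEquiv ⟦(m, u)⟧) (theEquiv ⟦(n, v)⟧) ≤ dQ ⟦(m, u)⟧ ⟦(n, v)⟧ := by
      intro m n u v
      have hdist : dist (theEquiv ⟦(m, u)⟧) (theEquiv ⟦(n, v)⟧)
          = max |(((u:ℂ)).re - 1) / (m:ℝ) - (((v:ℂ)).re - 1) / (n:ℝ)|
                |((u:ℂ)).im / (m:ℝ) - ((v:ℂ)).im / (n:ℝ)| := by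
        rw [dist_he]; rfl
      by_cases hmn : m = n
      · subst hmn
        rw [hdist, hdQ₁]
        apply max_le
        · have e : (((u:ℂ)).re - 1) / (m:ℝ) - (((v:ℂ)).re - 1) / (m:ℝ)
              = (((u:ℂ)).re - ((v:ℂ)).re) / (m:ℝ) := by ring
          rw [e, abs_div, abs_of_pos (pnat_pos m)]
          gcongr
          exact re_dist_le u v
        · have e : ((u:ℂ)).im / (m:ℝ) - ((v:ℂ)).im / (m:ℝ)
              = (((u:ℂ)).im - ((v:ℂ)).im) / (m:ℝ) := by ring
          rw [e, abs_div, abs_of_pos (pnat_pos m)]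
          gcongr
          exact im_dist_le u v
      · rw [hdist, hdQ₂ m n u v hmn]
        have hru : |((u:ℂ)).re - 1| ≤ dist u 1 := by
          simpa [Circle.coe_one, Complex.one_re] using re_dist_le u 1
        have hrv : |((v:ℂ)).re - 1| ≤ dist v 1 := by
          simpa [Circle.coe_one, Complex.one_re] using re_dist_le v 1
        have hiu : |((u:ℂ)).im| ≤ dist u 1 := by
          simpa [Circle.coe_one, Complex.one_im] using im_dist_le u 1
        have hiv : |((v:ℂ)).im| ≤ dist v 1 := by
          simpa [Circle.coe_one, Complex.one_im] using im_dist_le v 1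
        apply max_le
        · have h1 : |(((u:ℂ)).re - 1) / (m:ℝ)| ≤ dist u 1 / (m:ℝ) := by
            rw [abs_div, abs_of_pos (pnat_pos m)]
            gcongr
          have h2 : |(((v:ℂ)).re - 1) / (n:ℝ)| ≤ dist v 1 / (n:ℝ) := by
            rw [abs_div, abs_of_pos (pnat_pos n)]
            gcongr
          calc |(((u:ℂ)).re - 1) / (m:ℝ) - (((v:ℂ)).re - 1) / (n:ℝ)|
              ≤ |(((u:ℂ)).re - 1) / (m:ℝ)| + |(((v:ℂ)).re - 1) / (n:ℝ)| := abs_sub _ _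
            _ ≤ dist u 1 / (m:ℝ) + dist v 1 / (n:ℝ) := add_le_add h1 h2
        · have h1 : |((u:ℂ)).im / (m:ℝ)| ≤ dist u 1 / (m:ℝ) := by
            rw [abs_div, abs_of_pos (pnat_pos m)]
            gcongr
          have h2 : |((v:ℂ)).im / (n:ℝ)| ≤ dist v 1 / (n:ℝ) := by
            rw [abs_div, abs_of_pos (pnat_pos n)]
            gcongr
          calc |((u:ℂ)).im / (m:ℝ) - ((v:ℂ)).im / (n:ℝ)|
              ≤ |((u:ℂ)).im / (m:ℝ)| + |((v:ℂ)).im / (n:ℝ)| := abs_sub _ _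
            _ ≤ dist u 1 / (m:ℝ) + dist v 1 / (n:ℝ) := add_le_add h1 h2
    intro q ε hε
    refine ⟨ε, hε, fun q' hq' => ?_⟩
    obtain ⟨⟨m, u⟩, rfl⟩ := Quotient.exists_rep q
    obtain ⟨⟨n, v⟩, rfl⟩ := Quotient.exists_rep q'
    exact lt_of_le_of_lt (key1 m n u v) hq'
  · -- inverse continuity
    intro h ε hε
    have hsymm : ∀ g : HEset, theEquiv.symm g = invMap g := fun _ => rfl
    by_cases hz : h.1.1 = 0 ∧ h.1.2 = 0
    · refine ⟨ε / 2, by linarith, fun h' hlt => ?_⟩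
      have hupt : upt h = 1 := by
        apply Circle.coe_injective
        apply Complex.ext
        · rw [upt_re, hz.1, Circle.coe_one, Complex.one_re]; ring
        · rw [upt_im, hz.2, Circle.coe_one, Complex.one_im]; ring
      have hval : dQ (invMap h) (invMap h') ≤ dist (upt h') 1 / ((idx h' : ℕ+) : ℝ) := by
        rw [invMap_def, invMap_def, hupt]
        by_cases hii : idx h = idx h'
        · rw [hii, hdQ₁, dist_comm]
        · rw [hdQ₂ _ _ _ _ hii, dist_self]
          have : (0:ℝ) / ((idx h : ℕ+) : ℝ) = 0 := zero_div _
          rw [this, zero_add]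
      have hb := upt_dist_one h'
      have hdd := dist_he h h'
      rw [hz.1, hz.2, zero_sub, zero_sub, abs_neg, abs_neg] at hdd
      have h1 : |h'.1.1| ≤ dist h h' := hdd ▸ le_max_left _ _
      have h2 : |h'.1.2| ≤ dist h h' := hdd ▸ le_max_right _ _
      rw [hsymm, hsymm]
      calc dQ (invMap h) (invMap h') ≤ dist (upt h') 1 / ((idx h' : ℕ+) : ℝ) := hval
        _ ≤ |h'.1.1| + |h'.1.2| := hb
        _ < ε := by linarith
    · have hs : 0 < h.1.1 ^ 2 + h.1.2 ^ 2 := sq_pos_of_ne hz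
      set M := max |h.1.1| |h.1.2| with hMdef
      have hM0 : (0:ℝ) ≤ M := le_trans (abs_nonneg _) (le_max_left _ _)
      set δ0 := (h.1.1 ^ 2 + h.1.2 ^ 2) ^ 2 / (60 * (M + 1) ^ 3) with hδ0def
      have hδ0pos : 0 < δ0 := div_pos (by positivity) (by positivity)
      refine ⟨min (ε / 2) δ0, lt_min (by linarith) hδ0pos, fun h' hlt => ?_⟩
      have hlt1 : dist h h' < ε / 2 := lt_of_lt_of_le hlt (min_le_left _ _)
      have hlt2 : dist h h' < δ0 := lt_of_lt_of_le hlt (min_le_right _ _)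
      have hdd := dist_he h h'
      have hcomp := max_lt_iff.mp (hdd ▸ hlt2)
      have hcompε := max_lt_iff.mp (hdd ▸ hlt1)
      have hδeq : δ0 * (60 * (M + 1) ^ 3) = (h.1.1 ^ 2 + h.1.2 ^ 2) ^ 2 := by
        rw [hδ0def]
        field_simp
      have hidx : idx h = idx h' :=
        idx_close (idx_spec h) (idx_spec h') hs (le_max_left _ _) (le_max_right _ _)
          hδeq hcomp.1 hcomp.2
      rw [hsymm, hsymm, invMap_def, invMap_def, ← hidx, hdQ₁]
      have hdd2 : dist (upt h) (upt h')
          ≤ ((idx h : ℕ+) : ℝ) * (|h.1.1 - h'.1.1| + |h.1.2 - h'.1.2|) := by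
        have h1 := circle_dist_le (upt h) (upt h')
        rw [upt_re, upt_im, upt_re, upt_im, ← hidx] at h1
        have e1 : ((idx h : ℕ+) : ℝ) * h.1.1 + 1 - (((idx h : ℕ+) : ℝ) * h'.1.1 + 1)
            = ((idx h : ℕ+) : ℝ) * (h.1.1 - h'.1.1) := by ring
        have e2 : ((idx h : ℕ+) : ℝ) * h.1.2 - ((idx h : ℕ+) : ℝ) * h'.1.2
            = ((idx h : ℕ+) : ℝ) * (h.1.2 - h'.1.2) := by ring
        rw [e1, e2, abs_mul, abs_mul, abs_of_pos (pnat_pos _)] at h1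
        rw [mul_add]
        exact h1
      rw [div_lt_iff₀ (pnat_pos _)]
      have hsum : |h.1.1 - h'.1.1| + |h.1.2 - h'.1.2| < ε := by
        linarith [hcompε.1, hcompε.2]
      calc dist (upt h) (upt h')
          ≤ ((idx h : ℕ+) : ℝ) * (|h.1.1 - h'.1.1| + |h.1.2 - h'.1.2|) := hdd2
        _ < ((idx h : ℕ+) : ℝ) * ε := by
            exact mul_lt_mul_of_pos_left hsum (pnat_pos _)
        _ = ε * ((idx h : ℕ+) : ℝ) := by ring
  · -- continuity of sigma
    have key3 : ∀ p q : X × Circle, p ∈ ECar d → q ∈ ECar d →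
        dQ (sigmaQ d p) (sigmaQ d q) ≤ rho d p q := by
      intro p q hp hq
      by_cases h1 : p.1 = q.1 ∧ ∃ n : ℕ+, p.1 = d n
      · obtain ⟨hpq, hex⟩ := h1
        have hexq : ∃ n : ℕ+, q.1 = d n := hpq ▸ hex
        have hcc : hex.choose = hexq.choose :=
          hd (by rw [← hex.choose_spec, ← hexq.choose_spec, hpq])
        rw [rho, if_pos ⟨hpq, hex⟩, sigmaQ, dif_pos hex, sigmaQ, dif_pos hexq, ← hcc,
          hdQ₁, wt_pos_eq d hex]
        exact le_of_eq (by ring)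
      · rw [rho, if_neg h1]
        by_cases hpx : ∃ n : ℕ+, p.1 = d n
        · by_cases hqx : ∃ n : ℕ+, q.1 = d n
          · have hne : p.1 ≠ q.1 := fun hc => h1 ⟨hc, hpx⟩
            have hcne : hpx.choose ≠ hqx.choose := fun hc =>
              hne (by rw [hpx.choose_spec, hqx.choose_spec, hc])
            rw [sigmaQ, dif_pos hpx, sigmaQ, dif_pos hqx, hdQ₂ _ _ _ _ hcne,
              wt_pos_eq d hpx, wt_pos_eq d hqx]
            have hd0 : (0:ℝ) ≤ dist p.1 q.1 := dist_nonneg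
            have e : dist p.2 1 / ((hpx.choose : ℕ+) : ℝ) + dist q.2 1 / ((hqx.choose : ℕ+) : ℝ)
                = 1 / ((hpx.choose : ℕ+) : ℝ) * dist p.2 1
                  + 1 / ((hqx.choose : ℕ+) : ℝ) * dist q.2 1 := by ring
            rw [e]
            linarith
          · have hq2 : q.2 = 1 := (hq : q.2 = 1 ∨ _).resolve_right hqx
            rw [sigmaQ, dif_pos hpx, sigmaQ, dif_neg hqx, hq2, wt_pos_eq d hpx,
              wt_neg_eq d hqx]
            have hd0 : (0:ℝ) ≤ dist p.1 q.1 := dist_nonneg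
            have hgoal : dQ ⟦(hpx.choose, p.2)⟧ ⟦(1, 1)⟧
                = dist p.2 1 / ((hpx.choose : ℕ+) : ℝ) := by
              by_cases hc1 : hpx.choose = (1 : ℕ+)
              · rw [hc1, hdQ₁]
              · rw [hdQ₂ _ _ _ _ hc1, dist_self]
                have h1R : (((1:ℕ+)) : ℝ) = 1 := by exact_mod_cast PNat.one_coe
                rw [h1R]
                ring
            rw [hgoal]
            have e : dist p.2 1 / ((hpx.choose : ℕ+) : ℝ)
                = 1 / ((hpx.choose : ℕ+) : ℝ) * dist p.2 1 := by ring
            rw [e]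
            have hdist11 : (0:ℝ) ≤ 0 * dist (1:Circle) 1 := by simp
            linarith [hdist11]
        · have hp2 : p.2 = 1 := (hp : p.2 = 1 ∨ _).resolve_right hpx
          rw [sigmaQ, dif_neg hpx, wt_neg_eq d hpx, hp2]
          by_cases hqx : ∃ n : ℕ+, q.1 = d n
          · rw [sigmaQ, dif_pos hqx, wt_pos_eq d hqx]
            have hd0 : (0:ℝ) ≤ dist p.1 q.1 := dist_nonneg
            have hgoal : dQ ⟦((1:ℕ+), (1:Circle))⟧ ⟦(hqx.choose, q.2)⟧
                = dist q.2 1 / ((hqx.choose : ℕ+) : ℝ) := by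
              by_cases hc1 : (1:ℕ+) = hqx.choose
              · rw [← hc1, hdQ₁, dist_comm]
              · rw [hdQ₂ _ _ _ _ hc1, dist_self]
                have h1R : (((1:ℕ+)) : ℝ) = 1 := by exact_mod_cast PNat.one_coe
                rw [h1R]
                ring
            rw [hgoal]
            have e : dist q.2 1 / ((hqx.choose : ℕ+) : ℝ)
                = 1 / ((hqx.choose : ℕ+) : ℝ) * dist q.2 1 := by ring
            rw [e]
            have hdist11 : (0:ℝ) ≤ 0 * dist (1:Circle) 1 := by simp
            linarith [hdist11]
          · have hq2 : q.2 = 1 := (hq : q.2 = 1 ∨ _).resolve_right hqx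
            rw [sigmaQ, dif_neg hqx, wt_neg_eq d hqx, hq2, hdQ₁, dist_self]
            have hd0 : (0:ℝ) ≤ dist p.1 q.1 := dist_nonneg
            have h0 : (0:ℝ) / (((1:ℕ+)) : ℝ) = 0 := zero_div _
            rw [h0]
            have : (0:ℝ) ≤ 0 * dist (1:Circle) 1 := by simp
            linarith
    intro p ε hε
    refine ⟨ε, hε, fun q hq => lt_of_le_of_lt (key3 p.val q.val p.2 q.2) hq⟩

end EarringPaper
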